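/- (Differential equation for the total population.) Let T > 0 and let (f,S) be a weak solution on [0,T] with input D ∈ L^∞_loc([0,∞);[0,∞)) and initial condition (f₀,S₀) ∈ X. Then the map t ↦ ∫₀^∞ f(t,a) da is absolutely continuous on [0,T] and satisfies, for almost every t ∈ [0,T], (d/dt) ∫₀^∞ f(t,a) da = μ(S(t)) ∫₀^∞ k(a) f(t,a) da − D(t) ∫₀^∞ f(t,a) da − ∫₀^∞ β(a) f(t,a) da. -/

import Mathlib

open MeasureTheory Set Filter

noncomputable section

/-- Membership in the state space `X`: `f` is a positive continuous integrable
age-distribution vanishing at infinity, `S ∈ (0, S_in)`, and the renewal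
compatibility condition `f(0) = μ(S)·∫₀^∞ k(a) f(a) da` holds. -/
def MemX (μ k : ℝ → ℝ) (S_in : ℝ) (f : ℝ → ℝ) (S : ℝ) : Prop :=
  ContinuousOn f (Ici 0) ∧ (∀ a, 0 ≤ a → 0 < f a) ∧
  Tendsto f atTop (nhds 0) ∧ IntegrableOn f (Ioi 0) ∧
  S ∈ Ioo 0 S_in ∧ f 0 = μ S * ∫ a in Ioi (0:ℝ), k a * f a

/-- Admissible inputs: `D ∈ L^∞_loc([0,∞); [0,∞))` (represented by a measurable,
non-negative function bounded on every compact interval `[0,T]`). -/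
def AdmissibleInput (D : ℝ → ℝ) : Prop :=
  Measurable D ∧ (∀ t, 0 ≤ t → 0 ≤ D t) ∧
  ∀ T, 0 < T → ∃ C, ∀ t ∈ Icc (0:ℝ) T, D t ≤ C

/-- Standing assumptions on the model data `μ, β, k, q : [0,∞) → [0,∞)` and `S_in > 0`:
all are bounded continuous non-negative, `μ ∈ C¹`, `μ(0) = 0`, `μ(S) > 0` for `S > 0`,
and `∫₀^∞ k > 0`, `∫₀^∞ q > 0`. -/
def ModelHyp (μ β k q : ℝ → ℝ) (S_in : ℝ) : Prop :=
  ContinuousOn μ (Ici 0) ∧ (∀ s, 0 ≤ s → 0 ≤ μ s) ∧ (∃ C, ∀ s, 0 ≤ s → μ s ≤ C) ∧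
  ContDiffOn ℝ 1 μ (Ici 0) ∧ μ 0 = 0 ∧ (∀ s, 0 < s → 0 < μ s) ∧
  ContinuousOn β (Ici 0) ∧ (∀ a, 0 ≤ a → 0 ≤ β a) ∧ (∃ C, ∀ a, 0 ≤ a → β a ≤ C) ∧
  ContinuousOn k (Ici 0) ∧ (∀ a, 0 ≤ a → 0 ≤ k a) ∧ (∃ C, ∀ a, 0 ≤ a → k a ≤ C) ∧
  ContinuousOn q (Ici 0) ∧ (∀ a, 0 ≤ a → 0 ≤ q a) ∧ (∃ C, ∀ a, 0 ≤ a → q a ≤ C) ∧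
  (0 < ∫⁻ a in Ioi (0:ℝ), ENNReal.ofReal (k a)) ∧
  (0 < ∫⁻ a in Ioi (0:ℝ), ENNReal.ofReal (q a)) ∧
  0 < S_in

/-- Test functions for the weak formulation: `φ` is bounded, of class `C¹` on
`[0,T]×[0,∞)` (with partial derivatives `φt`, `φa`), and `∂φ/∂a + ∂φ/∂t` is bounded. -/
def TestFun (T : ℝ) (φ φt φa : ℝ → ℝ → ℝ) : Prop :=
  ContinuousOn (fun p : ℝ × ℝ => φ p.1 p.2) (Icc 0 T ×ˢ Ici (0:ℝ)) ∧
  ContinuousOn (fun p : ℝ × ℝ => φt p.1 p.2) (Icc 0 T ×ˢ Ici (0:ℝ)) ∧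
  ContinuousOn (fun p : ℝ × ℝ => φa p.1 p.2) (Icc 0 T ×ˢ Ici (0:ℝ)) ∧
  (∀ s ∈ Icc 0 T, ∀ a ∈ Ici (0:ℝ),
    HasDerivAt (fun u => φ u a) (φt s a) s ∧ HasDerivAt (fun u => φ s u) (φa s a) a) ∧
  (∃ C, ∀ s ∈ Icc 0 T, ∀ a ∈ Ici (0:ℝ), |φ s a| ≤ C) ∧
  (∃ C, ∀ s ∈ Icc 0 T, ∀ a ∈ Ici (0:ℝ), |φa s a + φt s a| ≤ C)

/-- Weak solution on `[0,T]` with input `D` and initial condition `(f₀,S₀)` of the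
age-structured chemostat (2.1)–(2.3), (2.6): a continuous map `t ↦ (f[t],S(t))` into `X`
(jointly continuous and `L¹`-continuous in time), satisfying the initial condition, the
renewal boundary condition for all `t`, the substrate equation in integrated
(absolutely continuous / a.e.) form, and the weak (test function) formulation of the PDE. -/
def IsWeakSolution (μ β k q : ℝ → ℝ) (S_in : ℝ) (D : ℝ → ℝ) (T : ℝ)
    (f : ℝ → ℝ → ℝ) (S : ℝ → ℝ) (f₀ : ℝ → ℝ) (S₀ : ℝ) : Prop :=
  (∀ a, 0 ≤ a → f 0 a = f₀ a) ∧ S 0 = S₀ ∧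
  (∀ t ∈ Icc 0 T, MemX μ k S_in (f t) (S t)) ∧
  (∀ t₀ ∈ Icc 0 T, Tendsto (fun t => ∫ a in Ioi (0:ℝ), |f t a - f t₀ a|)
      (nhdsWithin t₀ (Icc 0 T)) (nhds 0)) ∧
  ContinuousOn (fun p : ℝ × ℝ => f p.1 p.2) (Icc 0 T ×ˢ Ici (0:ℝ)) ∧
  ContinuousOn S (Icc 0 T) ∧
  (∀ t ∈ Icc 0 T, f t 0 = μ (S t) * ∫ a in Ioi (0:ℝ), k a * f t a) ∧
  (∀ t ∈ Icc 0 T, S t = S₀ + ∫ s in (0:ℝ)..t,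
      (D s * (S_in - S s) - μ (S s) * ∫ a in Ioi (0:ℝ), q a * f s a)) ∧
  (∀ φ φt φa, TestFun T φ φt φa → ∀ t ∈ Icc 0 T,
    (∫ a in Ioi (0:ℝ), f₀ a * φ 0 a) + (∫ s in (0:ℝ)..t, f s 0 * φ s 0)
      = (∫ a in Ioi (0:ℝ), f t a * φ t a)
        + ∫ s in (0:ℝ)..t, ∫ a in Ioi (0:ℝ),
            ((β a + D s) * φ s a - φa s a - φt s a) * f s a)

/-- **Differential equation for the total population (eq. (A12)).** For every weak
solution `(f,S)` on `[0,T]` the map `t ↦ ∫₀^∞ f(t,a) da` is absolutely continuous on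
`[0,T]` with a.e. derivative
`μ(S(t))∫₀^∞ k(a) f(t,a) da − D(t)∫₀^∞ f(t,a) da − ∫₀^∞ β(a) f(t,a) da`; equivalently
(in integrated form), for all `t ∈ [0,T]`:
`∫₀^∞ f(t,a) da = ∫₀^∞ f₀(a) da + ∫₀^t (μ(S(s))∫₀^∞ k f(s,·) − D(s)∫₀^∞ f(s,·) − ∫₀^∞ β f(s,·)) ds`. -/
theorem total_population_ode
    (μ β k q : ℝ → ℝ) (S_in : ℝ) (hmodel : ModelHyp μ β k q S_in)
    (T : ℝ) (hT : 0 < T)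
    (D : ℝ → ℝ) (hD : AdmissibleInput D)
    (f : ℝ → ℝ → ℝ) (S : ℝ → ℝ) (f₀ : ℝ → ℝ) (S₀ : ℝ)
    (hX : MemX μ k S_in f₀ S₀)
    (hsol : IsWeakSolution μ β k q S_in D T f S f₀ S₀) :
    ∀ t ∈ Icc 0 T,
      (∫ a in Ioi (0:ℝ), f t a)
        = (∫ a in Ioi (0:ℝ), f₀ a)
          + ∫ s in (0:ℝ)..t,
              (μ (S s) * (∫ a in Ioi (0:ℝ), k a * f s a)
                - D s * (∫ a in Ioi (0:ℝ), f s a)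
                - ∫ a in Ioi (0:ℝ), β a * f s a) := by
  obtain ⟨hμc, hμnn, hμbd, hμC1, hμ0, hμpos, hβc, hβnn, ⟨Cβ, hCβ⟩, hkc, hknn, hkbd,
    hqc, hqnn, hqbd, hkint, hqint, hSin⟩ := hmodel
  obtain ⟨hDmeas, hDnn, hDbd⟩ := hD
  obtain ⟨CD, hCD⟩ := hDbd T hT
  obtain ⟨hinit, hS0eq, hmemX, hL1, hjoint, hScont, hbc, hSeq, hweak⟩ := hsol
  have hfint : ∀ s ∈ Icc (0:ℝ) T, IntegrableOn (f s) (Ioi 0) :=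
    fun s hs => (hmemX s hs).2.2.2.1
  have hfc : ∀ s ∈ Icc (0:ℝ) T, ContinuousOn (f s) (Ici 0) := fun s hs => (hmemX s hs).1
  have hfpos : ∀ s ∈ Icc (0:ℝ) T, ∀ a, 0 ≤ a → 0 < f s a := fun s hs => (hmemX s hs).2.1
  -- Helper: integrability and continuity (in time) of weighted total integrals
  have key : ∀ w : ℝ → ℝ, ∀ C : ℝ, ContinuousOn w (Ici 0) → (∀ a, 0 ≤ a → |w a| ≤ C) →
      (∀ s ∈ Icc (0:ℝ) T, IntegrableOn (fun a => w a * f s a) (Ioi 0)) ∧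
      ContinuousOn (fun s => ∫ a in Ioi (0:ℝ), w a * f s a) (Icc 0 T) := by
    intro w C hwc hwb
    have hint : ∀ s ∈ Icc (0:ℝ) T, IntegrableOn (fun a => w a * f s a) (Ioi 0) := by
      intro s hs
      refine Integrable.mono' ((hfint s hs).const_mul C) ?_ ?_
      · exact ((hwc.mono Ioi_subset_Ici_self).mul
          ((hfc s hs).mono Ioi_subset_Ici_self)).aestronglyMeasurable measurableSet_Ioi
      · filter_upwards [ae_restrict_mem measurableSet_Ioi] with a ha
        have hfa := (hfpos s hs a (le_of_lt ha)).le
        calc ‖w a * f s a‖ = |w a| * |f s a| := abs_mul _ _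
          _ ≤ C * f s a := by
              rw [abs_of_nonneg hfa]
              exact mul_le_mul_of_nonneg_right (hwb a (le_of_lt ha)) hfa
    refine ⟨hint, ?_⟩
    intro t₀ ht₀
    have hb := hL1 t₀ ht₀
    have hdiff : ∀ s ∈ Icc (0:ℝ) T,
        ‖(∫ a in Ioi (0:ℝ), w a * f s a) - ∫ a in Ioi (0:ℝ), w a * f t₀ a‖
          ≤ C * ∫ a in Ioi (0:ℝ), |f s a - f t₀ a| := by
      intro s hs
      rw [← integral_sub (hint s hs) (hint t₀ ht₀)]
      refine (norm_integral_le_integral_norm _).trans ?_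
      rw [← integral_const_mul]
      refine integral_mono_of_nonneg (Filter.Eventually.of_forall fun a => norm_nonneg _)
        (((hfint s hs).sub (hfint t₀ ht₀)).abs.const_mul C) ?_
      filter_upwards [ae_restrict_mem measurableSet_Ioi] with a ha
      rw [Real.norm_eq_abs, ← mul_sub, abs_mul]
      exact mul_le_mul_of_nonneg_right (hwb a ha.le) (abs_nonneg _)
    have hnorm : Tendsto (fun s =>
        ‖(∫ a in Ioi (0:ℝ), w a * f s a) - ∫ a in Ioi (0:ℝ), w a * f t₀ a‖)
        (nhdsWithin t₀ (Icc 0 T)) (nhds 0) := by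
      have hCb : Tendsto (fun s => C * ∫ a in Ioi (0:ℝ), |f s a - f t₀ a|)
          (nhdsWithin t₀ (Icc 0 T)) (nhds 0) := by
        simpa using hb.const_mul C
      refine squeeze_zero' ?_ ?_ hCb
      · filter_upwards with s using norm_nonneg _
      · filter_upwards [self_mem_nhdsWithin] with s hs using hdiff s hs
    exact tendsto_iff_norm_sub_tendsto_zero.mpr hnorm
  obtain ⟨hGint, hGcont⟩ := key β Cβ hβc
    (fun a ha => by rw [abs_of_nonneg (hβnn a ha)]; exact hCβ a ha)
  obtain ⟨hFint', hFcont'⟩ := key (fun _ => 1) 1 continuousOn_const (fun a _ => by norm_num)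
  have hFcont : ContinuousOn (fun s => ∫ a in Ioi (0:ℝ), f s a) (Icc 0 T) := by
    simpa only [one_mul] using hFcont'
  obtain ⟨CF, hCF⟩ := isCompact_Icc.exists_bound_of_continuousOn hFcont
  -- the constant-1 test function
  have htest : TestFun T (fun _ _ => (1:ℝ)) (fun _ _ => 0) (fun _ _ => 0) := by
    refine ⟨continuousOn_const, continuousOn_const, continuousOn_const, ?_, ⟨1, ?_⟩, ⟨0, ?_⟩⟩
    · intro s _ a _; exact ⟨hasDerivAt_const _ _, hasDerivAt_const _ _⟩
    · intro s _ a _; simp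
    · intro s _ a _; simp
  intro t ht
  have hsub : Icc (0:ℝ) t ⊆ Icc 0 T := Icc_subset_Icc_right ht.2
  have hw := hweak (fun _ _ => 1) (fun _ _ => 0) (fun _ _ => 0) htest t ht
  simp only [mul_one, sub_zero] at hw
  -- inner integral identity
  have hinner : ∀ s ∈ Icc (0:ℝ) T,
      (∫ a in Ioi (0:ℝ), (β a + D s) * f s a)
        = (∫ a in Ioi (0:ℝ), β a * f s a) + D s * ∫ a in Ioi (0:ℝ), f s a := by
    intro s hs
    have h1 : (∫ a in Ioi (0:ℝ), (β a + D s) * f s a)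
        = ∫ a in Ioi (0:ℝ), (β a * f s a + D s * f s a) := by
      congr 1; funext a; ring
    rw [h1, integral_add (hGint s hs) ((hfint s hs).const_mul (D s)), integral_const_mul]
  have h2 : (∫ s in (0:ℝ)..t, ∫ a in Ioi (0:ℝ), (β a + D s) * f s a)
      = ∫ s in (0:ℝ)..t,
          ((∫ a in Ioi (0:ℝ), β a * f s a) + D s * ∫ a in Ioi (0:ℝ), f s a) := by
    apply intervalIntegral.integral_congr
    intro s hs
    rw [uIcc_of_le ht.1] at hs
    exact hinner s (hsub hs)
  rw [h2] at hw
  -- interval integrabilities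
  have hGII : IntervalIntegrable (fun s => ∫ a in Ioi (0:ℝ), β a * f s a) volume 0 t := by
    apply ContinuousOn.intervalIntegrable
    rw [uIcc_of_le ht.1]
    exact hGcont.mono hsub
  have hDFII : IntervalIntegrable (fun s => D s * ∫ a in Ioi (0:ℝ), f s a) volume 0 t := by
    apply MeasureTheory.IntegrableOn.intervalIntegrable
    rw [uIcc_of_le ht.1]
    refine Integrable.mono' (integrable_const (CD * CF)) ?_ ?_
    · exact (hDmeas.aestronglyMeasurable.restrict).mul
        ((hFcont.mono hsub).aestronglyMeasurable measurableSet_Icc)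
    · filter_upwards [ae_restrict_mem measurableSet_Icc] with s hs
      have hs' : s ∈ Icc 0 T := hsub hs
      have hDs : |D s| ≤ CD := by
        rw [abs_of_nonneg (hDnn s hs'.1)]; exact hCD s hs'
      calc ‖D s * ∫ a in Ioi (0:ℝ), f s a‖
          = |D s| * ‖∫ a in Ioi (0:ℝ), f s a‖ := by
            rw [Real.norm_eq_abs, abs_mul, Real.norm_eq_abs]
        _ ≤ CD * CF :=
            mul_le_mul hDs (hCF s hs') (norm_nonneg _) (le_trans (abs_nonneg _) hDs)
  have hf0cont : ContinuousOn (fun s => f s 0) (Icc 0 T) :=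
    hjoint.comp (continuousOn_id.prodMk continuousOn_const)
      ((fun s hs => ⟨hs, by simp⟩ : MapsTo (fun s : ℝ => (s, (0:ℝ))) (Icc 0 T) (Icc 0 T ×ˢ Ici (0:ℝ))))
  have hf0II : IntervalIntegrable (fun s => f s 0) volume 0 t := by
    apply ContinuousOn.intervalIntegrable
    rw [uIcc_of_le ht.1]
    exact hf0cont.mono hsub
  -- rewrite the goal's integrand
  have h3 : (∫ s in (0:ℝ)..t,
        (μ (S s) * (∫ a in Ioi (0:ℝ), k a * f s a)
          - D s * (∫ a in Ioi (0:ℝ), f s a)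
          - ∫ a in Ioi (0:ℝ), β a * f s a))
      = ∫ s in (0:ℝ)..t,
          ((fun s => f s 0) s
            - ((fun s => ∫ a in Ioi (0:ℝ), β a * f s a) s
              + (fun s => D s * ∫ a in Ioi (0:ℝ), f s a) s)) := by
    apply intervalIntegral.integral_congr
    intro s hs
    rw [uIcc_of_le ht.1] at hs
    simp only
    rw [← hbc s (hsub hs)]
    ring
  have h4 := intervalIntegral.integral_sub hf0II (hGII.add hDFII)
  rw [h3, h4]
  have h5 := intervalIntegral.integral_add hGII hDFII
  rw [h5]
  linarith [hw]
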